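/- arXiv:1610.01253 — 2 statements merged into one kernel-verified Lean document; each statement's English description precedes it below -/
import Mathlib

section
/- For all nonnegative integers h, k, ℓ with k ≤ 2ℓ, the alternating sum ∑_{j=0}^{h} (-1)^j C(h,j) K_{2j}(k) equals ((-k)_h (-2ℓ+k)_h)/((-ℓ)_h (-ℓ+1/2)_h), where K_n(x) = K_n(x; 1/2, 2ℓ) are the Krawtchouk polynomials and (a)_h denotes the Pochhammer (rising factorial) symbol. -/
open Finset

/-- Pochhammer (rising factorial) symbol `(a)_n = a(a+1)⋯(a+n-1)`. -/
noncomputable def poch (a : ℝ) (n : ℕ) : ℝ := ∏ i ∈ Finset.range n, (a + i)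

/-- Krawtchouk polynomial `K_n(x; 1/2, N)`. -/
noncomputable def kraw (N : ℕ) (n : ℕ) (x : ℝ) : ℝ :=
  ∑ i ∈ Finset.range (n + 1),
    poch (-(n : ℝ)) i * poch (-x) i / (poch (-(N : ℝ)) i * (Nat.factorial i)) * 2 ^ i

lemma poch_zero (a : ℝ) : poch a 0 = 1 := by simp [poch]

lemma poch_succ (a : ℝ) (n : ℕ) : poch a (n+1) = poch a n * (a + n) := by
  simp [poch, Finset.prod_range_succ]

lemma poch_succ' (a : ℝ) (n : ℕ) : poch a (n+1) = a * poch (a+1) n := by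
  rw [poch, Finset.prod_range_succ']
  simp only [Nat.cast_zero, add_zero]
  rw [mul_comm]
  congr 1
  apply Finset.prod_congr rfl
  intro i _
  push_cast; ring

lemma poch_add (a : ℝ) (m n : ℕ) : poch a (m+n) = poch a m * poch (a+m) n := by
  induction n with
  | zero => simp [poch_zero]
  | succ n ih => rw [← Nat.add_assoc, poch_succ, ih, poch_succ]; push_cast; ring

lemma poch_neg_nat (n i : ℕ) : poch (-(n:ℝ)) i = (-1)^i * i.factorial * n.choose i := by
  induction i with
  | zero => simp [poch_zero]
  | succ i ih =>
    rw [poch_succ, ih]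
    rcases le_or_gt (i+1) n with hle | hlt
    · have h := Nat.choose_succ_right_eq n i
      have hcast : (n.choose (i+1) : ℝ) * (i+1) = n.choose i * ((n:ℝ) - i) := by
        have : ((n.choose (i+1) * (i+1) : ℕ) : ℝ) = ((n.choose i * (n - i) : ℕ) : ℝ) := by
          exact_mod_cast congrArg (Nat.cast (R := ℝ)) h
        push_cast [Nat.cast_sub (le_of_lt (Nat.lt_of_succ_le hle))] at this
        linarith
      have hfact : (Nat.factorial (i+1) : ℝ) = (i+1) * i.factorial := by
        push_cast [Nat.factorial_succ]; ring
      rw [hfact]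
      linear_combination ((-1:ℝ)^i * i.factorial) * hcast
    · have h2 : (n.choose (i+1) : ℝ) = 0 := by
        exact_mod_cast Nat.choose_eq_zero_of_lt hlt
      rw [h2]
      rcases Nat.lt_or_ge n i with h3 | h3
      · have h4 : (n.choose i : ℝ) = 0 := by exact_mod_cast Nat.choose_eq_zero_of_lt h3
        rw [h4]; ring
      · have : n = i := le_antisymm (Nat.lt_succ_iff.mp hlt) h3
        subst this; ring_nf

lemma poch_shift_ne_zero (N s n : ℕ) (h : s + n ≤ N) : poch (-(N:ℝ) + s) n ≠ 0 := by
  rw [poch, Finset.prod_ne_zero_iff]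
  intro i hi hc
  have hi' := Finset.mem_range.mp hi
  have hlt : ((s + i : ℕ) : ℝ) < ((N : ℕ) : ℝ) := Nat.cast_lt.mpr (by omega)
  push_cast at hlt
  linarith

lemma poch_neg_nat_ne_zero (N n : ℕ) (h : n ≤ N) : poch (-(N:ℝ)) n ≠ 0 := by
  have := poch_shift_ne_zero N 0 n (by omega)
  simpa using this

lemma poch_half_ne_zero (l h : ℕ) : poch (-(l:ℝ) + 1/2) h ≠ 0 := by
  rw [poch, Finset.prod_ne_zero_iff]
  intro i _ hc
  have h1 : (2*i+1 : ℝ) = 2*l := by linarith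
  have h2 : (2*i+1 : ℕ) = 2*l := by exact_mod_cast h1
  omega

lemma poch_double (a : ℝ) (h : ℕ) :
    poch (2*a) (2*h) = 4^h * poch a h * poch (a + 1/2) h := by
  induction h with
  | zero => simp [poch_zero]
  | succ h ih =>
    have e : 2*(h+1) = (2*h+1)+1 := by omega
    rw [e, poch_succ, poch_succ, ih, poch_succ, poch_succ]
    push_cast
    ring

open Polynomial in
lemma binom_sum (h i : ℕ) :
    ∑ j ∈ range (h+1), (-1:ℝ)^j * (h.choose j) * ((2*j).choose i) =
      if h ≤ i then (-1:ℝ)^h * (h.choose (i - h)) * 2^(2*h - i) else 0 := by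
  have hC2 : (Polynomial.C (2:ℝ)) = 2 := map_ofNat _ 2
  have hCneg : ∀ n : ℕ, Polynomial.C ((-1:ℝ)^n) = (-1 : ℝ[X])^n := by
    intro n; rw [map_pow, map_neg, map_one]
  have P : (∑ j ∈ range (h+1),
      Polynomial.C ((-1:ℝ)^j * (h.choose j)) * (1 + X)^(2*j) : ℝ[X])
      = Polynomial.C ((-1:ℝ)^h) * (X^h * (X + Polynomial.C 2)^h) := by
    have e1 : ∀ j ∈ range (h+1),
        Polynomial.C ((-1:ℝ)^j * (h.choose j)) * (1 + X)^(2*j)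
          = (-(1+X)^2)^j * 1^(h-j) * (h.choose j : ℝ[X]) := by
      intro j _
      rw [Polynomial.C_mul, hCneg, Polynomial.C_eq_natCast,
        show ((-(1+X)^2 : ℝ[X]))^j = (-1:ℝ[X])^j * ((1+X)^2)^j from neg_pow _ _,
        ← pow_mul, one_pow]
      ring
    rw [Finset.sum_congr rfl e1, ← add_pow]
    have e2 : (-(1+X)^2 + 1 : ℝ[X]) = -(X * (X + Polynomial.C 2)) := by
      rw [hC2]; ring
    rw [e2, show ((-(X * (X + Polynomial.C 2)) : ℝ[X]))^h
      = (-1:ℝ[X])^h * (X * (X + Polynomial.C 2))^h from neg_pow _ _, mul_pow, hCneg]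
  have := congrArg (fun p : ℝ[X] => p.coeff i) P
  simp only [Polynomial.finset_sum_coeff, Polynomial.coeff_C_mul,
    Polynomial.coeff_one_add_X_pow, Polynomial.coeff_X_pow_mul'] at this
  rw [this]
  by_cases hi : h ≤ i
  · rw [if_pos hi, if_pos hi, Polynomial.coeff_X_add_C_pow]
    have : h - (i - h) = 2*h - i := by omega
    rw [this]
    ring
  · rw [if_neg hi, if_neg hi, mul_zero]

lemma vand (h : ℕ) (a : ℝ) : ∀ c : ℝ,
    ∑ m ∈ range (h+1), (-1:ℝ)^m * (h.choose m) * poch a m * poch (c+m) (h-m)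
      = poch (c-a) h := by
  induction h with
  | zero => intro c; simp [poch_zero]
  | succ h ih =>
    intro c
    have split : ∀ m ∈ range (h+2),
        (-1:ℝ)^m * ((h+1).choose m) * poch a m * poch (c+m) (h+1-m)
          = ((-1:ℝ)^m * (h.choose m) * poch a m * poch (c+m) (h+1-m))
            + ((-1:ℝ)^m * (if m = 0 then (0:ℝ) else (h.choose (m-1) : ℝ))
                * poch a m * poch (c+m) (h+1-m)) := by
      intro m _
      rcases m with _ | m
      · simp
      · rw [if_neg (Nat.succ_ne_zero m), Nat.choose_succ_succ, Nat.succ_sub_one]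
        push_cast
        ring
    rw [Finset.sum_congr rfl split, Finset.sum_add_distrib]
    have hV : ∑ m ∈ range (h+2),
        ((-1:ℝ)^m * (if m = 0 then (0:ℝ) else (h.choose (m-1) : ℝ))
          * poch a m * poch (c+m) (h+1-m))
        = ∑ m ∈ range (h+1),
            (-((-1:ℝ)^m * (h.choose m) * (poch a m * (a+m)) * poch (c+(m+1)) (h-m))) := by
      rw [Finset.sum_range_succ']
      have z : ((-1:ℝ)^(0:ℕ) * (if (0:ℕ) = 0 then (0:ℝ) else ((h.choose (0-1) : ℕ) : ℝ))
          * poch a 0 * poch (c+((0:ℕ):ℝ)) (h+1-0)) = 0 := by simp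
      rw [z, add_zero]
      apply Finset.sum_congr rfl
      intro m _
      rw [if_neg (Nat.succ_ne_zero m)]
      have h1 : h + 1 - (m+1) = h - m := by omega
      have h2 : m + 1 - 1 = m := by omega
      rw [h1, h2, poch_succ]
      push_cast
      ring
    rw [hV]
    have hU : ∑ m ∈ range (h+2),
        ((-1:ℝ)^m * (h.choose m) * poch a m * poch (c+m) (h+1-m))
        = ∑ m ∈ range (h+1),
            ((-1:ℝ)^m * (h.choose m) * poch a m * ((c+m) * poch (c+(m+1)) (h-m))) := by
      rw [Finset.sum_range_succ, Nat.choose_succ_self]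
      simp only [Nat.cast_zero, mul_zero, zero_mul, add_zero]
      apply Finset.sum_congr rfl
      intro m hm
      have h1 : h + 1 - m = (h - m) + 1 := by
        have := Finset.mem_range.mp hm; omega
      rw [h1, poch_succ']
      push_cast
      ring_nf
    rw [hU, ← Finset.sum_add_distrib]
    have key : ∑ m ∈ range (h+1),
        ((-1:ℝ)^m * (h.choose m) * poch a m * ((c+m) * poch (c+(m+1)) (h-m))
          + -((-1:ℝ)^m * (h.choose m) * (poch a m * (a+m)) * poch (c+(m+1)) (h-m)))
        = (c - a) * ∑ m ∈ range (h+1),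
            (-1:ℝ)^m * (h.choose m) * poch a m * poch ((c+1)+m) (h-m) := by
      rw [Finset.mul_sum]
      apply Finset.sum_congr rfl
      intro m _
      have : c + ((m:ℝ)+1) = (c+1) + m := by ring
      rw [this]
      ring
    rw [key, ih (c+1)]
    have : c + 1 - a = (c - a) + 1 := by ring
    rw [this, ← poch_succ']

/-- `∑_{j=0}^{h} (-1)^j C(h,j) K_{2j}(k)
  = ((-k)_h (-2ℓ+k)_h)/((-ℓ)_h (-ℓ+1/2)_h)`. -/
theorem krawtchouk_alternating_sum (ℓ h k : ℕ) (hℓ : 1 ≤ ℓ) (hk : k ≤ 2 * ℓ) (hh : h ≤ ℓ) :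
    ∑ j ∈ Finset.range (h + 1), (-1 : ℝ) ^ j * (h.choose j) * kraw (2 * ℓ) (2 * j) k =
      poch (-(k : ℝ)) h * poch (-(2 * ℓ : ℝ) + k) h /
        (poch (-(ℓ : ℝ)) h * poch (-(ℓ : ℝ) + 1 / 2) h) := by
  set T : ℕ → ℕ → ℝ := fun i j =>
    poch (-((2*j : ℕ) : ℝ)) i * poch (-(k:ℝ)) i /
      (poch (-((2*ℓ : ℕ) : ℝ)) i * (Nat.factorial i)) * 2 ^ i with hT
  have stepA : ∀ j ∈ range (h+1), kraw (2*ℓ) (2*j) k = ∑ i ∈ range (2*h+1), T i j := by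
    intro j hj
    have hj' : j ≤ h := Nat.lt_succ_iff.mp (Finset.mem_range.mp hj)
    have : kraw (2*ℓ) (2*j) k = ∑ i ∈ range (2*j+1), T i j := rfl
    rw [this]
    apply Finset.sum_subset (Finset.range_subset_range.mpr (by omega))
    intro i _ hi2
    have hgt : 2*j < i := by
      by_contra hcon
      exact hi2 (Finset.mem_range.mpr (by omega))
    rw [hT]
    simp only
    rw [poch_neg_nat, Nat.choose_eq_zero_of_lt hgt]
    simp
  set G : ℕ → ℝ := fun i =>
    (-1:ℝ)^h * (h.choose (i-h)) * 2^(2*h-i) *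
      ((-1)^i * (Nat.factorial i) * poch (-(k:ℝ)) i /
        (poch (-((2*ℓ : ℕ) : ℝ)) i * (Nat.factorial i)) * 2^i) with hG
  have step1 : ∑ j ∈ range (h+1), (-1:ℝ)^j * (h.choose j) * kraw (2*ℓ) (2*j) k
      = ∑ i ∈ range (2*h+1), (if h ≤ i then G i else 0) := by
    calc ∑ j ∈ range (h+1), (-1:ℝ)^j * (h.choose j) * kraw (2*ℓ) (2*j) k
        = ∑ j ∈ range (h+1), ∑ i ∈ range (2*h+1), (-1:ℝ)^j * (h.choose j) * T i j := by
          apply Finset.sum_congr rfl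
          intro j hj
          rw [stepA j hj, Finset.mul_sum]
      _ = ∑ i ∈ range (2*h+1), ∑ j ∈ range (h+1), (-1:ℝ)^j * (h.choose j) * T i j :=
          Finset.sum_comm
      _ = ∑ i ∈ range (2*h+1), (if h ≤ i then G i else 0) := by
          apply Finset.sum_congr rfl
          intro i _
          have inner : ∀ j ∈ range (h+1), (-1:ℝ)^j * (h.choose j) * T i j
              = ((-1:ℝ)^j * (h.choose j) * ((2*j).choose i)) *
                ((-1)^i * (Nat.factorial i) * poch (-(k:ℝ)) i /
                  (poch (-((2*ℓ : ℕ) : ℝ)) i * (Nat.factorial i)) * 2^i) := by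
            intro j _
            rw [hT]
            simp only
            rw [poch_neg_nat (2*j) i]
            ring
          rw [Finset.sum_congr rfl inner, ← Finset.sum_mul, binom_sum]
          by_cases hi : h ≤ i
          · rw [if_pos hi, if_pos hi, hG]
          · rw [if_neg hi, if_neg hi, zero_mul]
  rw [step1]
  have step2 : ∑ i ∈ range (2*h+1), (if h ≤ i then G i else 0)
      = ∑ m ∈ range (h+1), G (h+m) := by
    rw [Finset.range_eq_Ico, ← Finset.sum_Ico_consecutive _ (Nat.zero_le h) (by omega : h ≤ 2*h+1)]
    have z1 : ∑ i ∈ Finset.Ico 0 h, (if h ≤ i then G i else 0) = 0 :=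
      Finset.sum_eq_zero (fun i hi => if_neg (Nat.not_le.mpr (Finset.mem_Ico.mp hi).2))
    rw [z1, zero_add, Finset.sum_Ico_eq_sum_range]
    have e : 2*h+1-h = h+1 := by omega
    rw [e]
    apply Finset.sum_congr rfl
    intro m _
    rw [if_pos (by omega)]
  rw [step2]
  -- per-term rewriting to common denominator
  have step3 : ∀ m ∈ range (h+1), G (h+m)
      = (4^h * poch (-(k:ℝ)) h / poch (-((2*ℓ : ℕ) : ℝ)) (2*h)) *
        ((-1:ℝ)^m * (h.choose m) * poch (-(k:ℝ) + h) m *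
          poch ((-((2*ℓ : ℕ) : ℝ) + h) + m) (h-m)) := by
    intro m hm
    have hm' : m ≤ h := Nat.lt_succ_iff.mp (Finset.mem_range.mp hm)
    rw [hG]
    simp only
    have e1 : h + m - h = m := by omega
    have e2 : 2*h - (h+m) = h - m := by omega
    rw [e1, e2]
    have eK : poch (-(k:ℝ)) (h+m) = poch (-(k:ℝ)) h * poch (-(k:ℝ) + h) m := poch_add _ _ _
    have eL : poch (-((2*ℓ : ℕ) : ℝ)) (2*h)
        = poch (-((2*ℓ : ℕ) : ℝ)) (h+m) * poch ((-((2*ℓ : ℕ) : ℝ) + h) + m) (h-m) := by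
      have e3 : 2*h = (h+m) + (h-m) := by omega
      rw [e3, poch_add]
      congr 2
      push_cast
      ring
    have P1 : poch (-((2*ℓ : ℕ) : ℝ)) (h+m) ≠ 0 := poch_neg_nat_ne_zero _ _ (by omega)
    have P2 : poch ((-((2*ℓ : ℕ) : ℝ) + h) + m) (h-m) ≠ 0 := by
      have := poch_shift_ne_zero (2*ℓ) (h+m) (h-m) (by omega)
      have ee : (-((2*ℓ:ℕ):ℝ) + ((h+m:ℕ):ℝ)) = ((-((2*ℓ : ℕ) : ℝ) + h) + m) := by
        push_cast; ring
      rwa [ee] at this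
    have F : ((h+m).factorial : ℝ) ≠ 0 := Nat.cast_ne_zero.mpr (Nat.factorial_ne_zero _)
    have h4 : (4:ℝ)^h = 2^(h-m) * 2^(h+m) := by
      rw [← pow_add, show h-m+(h+m) = 2*h from by omega,
        show (4:ℝ) = 2^2 from by norm_num, ← pow_mul]
    have hpow : (-1:ℝ)^(h+m) = (-1)^h * (-1)^m := pow_add _ _ _
    rw [eK, eL, hpow, h4]
    set F1 := ((h+m).factorial : ℝ) with hF1
    set Q1 := poch (-((2*ℓ : ℕ) : ℝ)) (h+m) with hQ1
    set Q2 := poch ((-((2*ℓ : ℕ) : ℝ) + h) + m) (h-m) with hQ2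
    set K1 := poch (-(k:ℝ)) h with hK1
    set K2 := poch (-(k:ℝ) + h) m with hK2
    have q3 : ((-1:ℝ))^(h*2) = 1 := by rw [mul_comm h 2, pow_mul]; norm_num
    field_simp
    linear_combination ((h.choose m : ℝ) * K1 * K2) * q3
  rw [Finset.sum_congr rfl step3, ← Finset.mul_sum, vand]
  have eca : (-((2*ℓ : ℕ) : ℝ) + h) - (-(k:ℝ) + h) = -(2 * ℓ : ℝ) + k := by
    push_cast; ring
  rw [eca]
  have eD : poch (-((2*ℓ : ℕ) : ℝ)) (2*h) = 4^h * poch (-(ℓ:ℝ)) h * poch (-(ℓ:ℝ) + 1/2) h := by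
    have : (-((2*ℓ : ℕ) : ℝ)) = 2 * (-(ℓ:ℝ)) := by push_cast; ring
    rw [this, poch_double]
  rw [eD]
  have A : poch (-(ℓ:ℝ)) h ≠ 0 := poch_neg_nat_ne_zero _ _ hh
  have B : poch (-(ℓ:ℝ) + 1/2) h ≠ 0 := poch_half_ne_zero _ _
  have C4 : (4:ℝ)^h ≠ 0 := by positivity
  set K1 := poch (-(k:ℝ)) h with hK1
  set M1 := poch (-(2 * ℓ : ℝ) + k) h with hM1
  set L1 := poch (-(ℓ:ℝ)) h with hL1
  set L2 := poch (-(ℓ:ℝ) + 1/2) h with hL2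
  field_simp
end

section
/- For all nonnegative integers h and i, the sum ∑_{j=0}^{h} (-1)^j C(h,j) C(2j,i) equals (-1)^h 2^{2h-i} C(h, i-h), where C(n,k) denotes the binomial coefficient (taken to be 0 when k < 0 or k > n). -/
open Polynomial Finset

/-- `∑_{j=0}^{h} (-1)^j C(h,j) C(2j,i) = (-1)^h 2^{2h-i} C(h, i-h)`,
where the binomial coefficient is `0` when the lower index is negative or exceeds the upper. -/
theorem alternating_binomial_sum (h i : ℕ) :
    ∑ j ∈ Finset.range (h + 1), (-1 : ℝ) ^ j * (h.choose j) * ((2 * j).choose i) =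
      (-1 : ℝ) ^ h * (2 : ℝ) ^ ((2 * h : ℤ) - i) *
        (if i < h then 0 else (h.choose (i - h) : ℝ)) := by
  have key : ∑ j ∈ Finset.range (h + 1),
      (Polynomial.C ((-1 : ℝ) ^ j * (h.choose j)) * (X + 1) ^ (2 * j)) =
      Polynomial.C ((-1 : ℝ) ^ h) * (X ^ h * (X + Polynomial.C 2) ^ h) := by
    have hstep : ∀ j ∈ Finset.range (h + 1),
        Polynomial.C ((-1 : ℝ) ^ j * (h.choose j)) * (X + 1) ^ (2 * j)
          = (-(X + 1) ^ 2) ^ j * 1 ^ (h - j) * (h.choose j : ℝ[X]) := by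
      intro j _
      rw [one_pow, mul_one, neg_pow ((X + (1 : ℝ[X])) ^ 2) j, ← pow_mul]
      simp only [map_mul, map_pow, map_neg, map_one, map_natCast]
      ring
    rw [Finset.sum_congr rfl hstep, ← add_pow (-(X + (1 : ℝ[X])) ^ 2) 1 h]
    have : -(X + (1 : ℝ[X])) ^ 2 + 1 = (-1) * (X * (X + Polynomial.C 2)) := by
      rw [map_ofNat]
      ring
    rw [this, mul_pow, mul_pow]
    simp [mul_assoc]
  have hcoeff := congrArg (fun p : ℝ[X] => p.coeff i) key
  simp only [Polynomial.finset_sum_coeff, Polynomial.coeff_C_mul] at hcoeff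
  have hterm : ∀ j, (((X : ℝ[X]) + 1) ^ (2 * j)).coeff i = ((2 * j).choose i : ℝ) := fun j =>
    Polynomial.coeff_X_add_one_pow ℝ (2 * j) i
  simp only [hterm, mul_assoc] at hcoeff
  simp only [mul_assoc]
  rw [hcoeff]
  rw [Polynomial.coeff_X_pow_mul', Polynomial.coeff_X_add_C_pow]
  by_cases hi : i < h
  · rw [if_neg (by omega), if_pos hi]
    ring
  · rw [if_pos (by omega), if_neg hi]
    by_cases h2 : i ≤ 2 * h
    · have : ((2 * h : ℤ) - i) = ((h - (i - h) : ℕ) : ℤ) := by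
        push_cast [Nat.cast_sub (by omega : i - h ≤ h), Nat.cast_sub (by omega : h ≤ i)]
        ring
      rw [this, zpow_natCast]
    · rw [Nat.choose_eq_zero_of_lt (by omega : h < i - h)]
      simp
end
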